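/- Let L > 0, let σ be a real number, and let Φ : ℝ → ℝ be twice continuously differentiable with Φ''(x) = −σΦ(x) for all x ∈ [0, L] and Φ'(0) = Φ'(L) = 0. Then ∫₀^L (Φ'(x))⁴ dx = σ²·∫₀^L Φ(x)⁴ dx. -/

import Mathlib

/-- Integral identity (5.24): for a Neumann eigenfunction Φ on [0,L] with
eigenvalue σ, ∫₀^L (Φ')⁴ dx = σ² ∫₀^L Φ⁴ dx. -/
theorem integral_grad_pow_four (L σ : ℝ) (hL : 0 < L) (Φ : ℝ → ℝ)
    (hΦ : ContDiff ℝ 2 Φ)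
    (heig : ∀ x ∈ Set.Icc (0 : ℝ) L, deriv (deriv Φ) x = -σ * Φ x)
    (hbc0 : deriv Φ 0 = 0) (hbcL : deriv Φ L = 0) :
    ∫ x in (0 : ℝ)..L, (deriv Φ x) ^ 4 =
      σ ^ 2 * ∫ x in (0 : ℝ)..L, (Φ x) ^ 4 := by
  have hΦd : Differentiable ℝ Φ := hΦ.differentiable (by norm_num)
  have h2 : ContDiff ℝ ((1 : ℕ∞) + 1) Φ := by norm_num; exact hΦ
  have h1 : ContDiff ℝ 1 (deriv Φ) := (contDiff_succ_iff_deriv.mp h2).2.2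
  have hfd : Differentiable ℝ (deriv Φ) := h1.differentiable one_ne_zero
  have hcΦ : Continuous Φ := hΦd.continuous
  have hcf : Continuous (deriv Φ) := hfd.continuous
  set G : ℝ → ℝ := fun x => Φ x * (deriv Φ x) ^ 3 + σ * ((Φ x) ^ 3 * deriv Φ x) with hG
  have key : ∀ x ∈ Set.uIcc (0 : ℝ) L,
      HasDerivAt G ((deriv Φ x) ^ 4 - σ ^ 2 * (Φ x) ^ 4) x := by
    intro x hx
    rw [Set.uIcc_of_le hL.le] at hx
    have hd1 : HasDerivAt Φ (deriv Φ x) x := (hΦd x).hasDerivAt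
    have hd2 : HasDerivAt (deriv Φ) (-σ * Φ x) x := by
      have := (hfd x).hasDerivAt
      rwa [heig x hx] at this
    have hder := (hd1.mul (hd2.pow 3)).add (((hd1.pow 3).mul hd2).const_mul σ)
    have heq : deriv Φ x * deriv Φ x ^ 3 + Φ x * (↑3 * deriv Φ x ^ (3 - 1) * (-σ * Φ x)) +
        σ * (↑3 * Φ x ^ (3 - 1) * deriv Φ x * deriv Φ x + Φ x ^ 3 * (-σ * Φ x)) =
        (deriv Φ x) ^ 4 - σ ^ 2 * (Φ x) ^ 4 := by push_cast; ring
    exact heq ▸ hder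
  have hint : IntervalIntegrable
      (fun x => (deriv Φ x) ^ 4 - σ ^ 2 * (Φ x) ^ 4) MeasureTheory.volume 0 L :=
    ((hcf.pow 4).sub (continuous_const.mul (hcΦ.pow 4))).intervalIntegrable 0 L
  have hI := intervalIntegral.integral_eq_sub_of_hasDerivAt key hint
  have hGL : G L - G 0 = 0 := by simp [hG, hbc0, hbcL]
  rw [hGL] at hI
  have hi1 : IntervalIntegrable (fun x => (deriv Φ x) ^ 4) MeasureTheory.volume 0 L :=
    (hcf.pow 4).intervalIntegrable 0 L
  have hi2 : IntervalIntegrable (fun x => σ ^ 2 * (Φ x) ^ 4) MeasureTheory.volume 0 L :=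
    (continuous_const.mul (hcΦ.pow 4)).intervalIntegrable 0 L
  rw [intervalIntegral.integral_sub hi1 hi2, intervalIntegral.integral_const_mul] at hI
  linarith
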